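/- Define H : ℝ³ → ℝ by H(ξ) = ‖ξ‖·√(2 + ‖ξ‖²), so that for ξ ≠ 0 the gradient is ∇H(ξ) = h'(‖ξ‖)·ξ/‖ξ‖ with h'(r) = 2(1+r²)/√(2+r²). There exists a constant C > 0 such that for all nonzero x, y ∈ ℝ³ and each sign ε ∈ {+1, -1}: ‖∇H(x) + ε·∇H(y)‖ ≤ C·( |‖x‖ - ‖y‖| · max(‖x‖/√(2+‖x‖²), ‖y‖/√(2+‖y‖²)) + min(√(2+‖x‖²), √(2+‖y‖²)) · sin(∠(x, -ε·y)/2) ), where ∠(u,w) ∈ [0, π] denotes the angle between nonzero vectors u and w determined by cos ∠(u,w) = ⟨u,w⟩/(‖u‖·‖w‖). -/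

import Mathlib

noncomputable def hp (t : ℝ) : ℝ := 2 * (1 + t ^ 2) / Real.sqrt (2 + t ^ 2)

lemma q_pos (t : ℝ) : (0:ℝ) < 2 + t ^ 2 := by positivity

lemma sq_sqrt_q (t : ℝ) : Real.sqrt (2 + t ^ 2) ^ 2 = 2 + t ^ 2 :=
  Real.sq_sqrt (q_pos t).le

lemma sqrt_q_pos (t : ℝ) : 0 < Real.sqrt (2 + t ^ 2) := Real.sqrt_pos.2 (q_pos t)

lemma hp_pos (t : ℝ) : 0 < hp t := by
  unfold hp; positivity

lemma hp_le (t : ℝ) : hp t ≤ 2 * Real.sqrt (2 + t ^ 2) := by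
  unfold hp
  rw [div_le_iff₀ (sqrt_q_pos t)]
  nlinarith [sqrt_q_pos t, sq_sqrt_q t]

lemma ratio_mono {t T : ℝ} (ht : 0 ≤ t) (hT : t ≤ T) :
    t / Real.sqrt (2 + t ^ 2) ≤ T / Real.sqrt (2 + T ^ 2) := by
  rw [div_le_div_iff₀ (sqrt_q_pos t) (sqrt_q_pos T)]
  have h1 := sq_sqrt_q t
  have h2 := sq_sqrt_q T
  have hs1 := (sqrt_q_pos t).le
  have hs2 := (sqrt_q_pos T).le
  nlinarith [mul_nonneg ht hs2, mul_nonneg (ht.trans hT) hs1,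
    sq_nonneg (t * Real.sqrt (2 + T^2) - T * Real.sqrt (2 + t^2)),
    sq_nonneg (t * Real.sqrt (2 + T^2) + T * Real.sqrt (2 + t^2))]

lemma hp_hasDerivAt (t : ℝ) :
    HasDerivAt hp (2 * t * (3 + t ^ 2) / ((2 + t ^ 2) * Real.sqrt (2 + t ^ 2))) t := by
  have hq : HasDerivAt (fun u : ℝ => 2 + u ^ 2) (2 * t) t := by
    simpa using ((hasDerivAt_pow 2 t).const_add 2)
  have hs : HasDerivAt (fun u : ℝ => Real.sqrt (2 + u ^ 2))
      ((2 * t) / (2 * Real.sqrt (2 + t ^ 2))) t := hq.sqrt (q_pos t).ne'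
  have hn : HasDerivAt (fun u : ℝ => 2 * (1 + u ^ 2)) (2 * (2 * t)) t := by
    simpa using (((hasDerivAt_pow 2 t).const_add 1).const_mul (2:ℝ))
  have h := hn.div hs (sqrt_q_pos t).ne'
  refine h.congr_deriv ?_
  have h1 := sq_sqrt_q t
  have h2 := (sqrt_q_pos t).ne'
  have h0 := (q_pos t).ne'
  field_simp
  linear_combination (t + t ^ 3) * h1

lemma hp_lip {r s : ℝ} (hr : 0 ≤ r) (hs : 0 ≤ s) :
    |hp r - hp s| ≤ 3 * |r - s| *
      max (r / Real.sqrt (2 + r ^ 2)) (s / Real.sqrt (2 + s ^ 2)) := by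
  set M := max (r / Real.sqrt (2 + r ^ 2)) (s / Real.sqrt (2 + s ^ 2)) with hM
  have hTM : max r s / Real.sqrt (2 + max r s ^ 2) ≤ M := by
    rcases max_cases r s with ⟨h, _⟩ | ⟨h, _⟩ <;> rw [h]
    · exact le_max_left _ _
    · exact le_max_right _ _
  have key : ∀ t ∈ Set.uIcc s r,
      ‖2 * t * (3 + t ^ 2) / ((2 + t ^ 2) * Real.sqrt (2 + t ^ 2))‖ ≤ 3 * M := by
    intro t htm
    rw [Set.mem_uIcc] at htm
    have ht0 : 0 ≤ t := by rcases htm with ⟨h1, _⟩ | ⟨h1, _⟩ <;> linarith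
    have htT : t ≤ max r s := by
      rcases htm with ⟨_, h2⟩ | ⟨_, h2⟩
      · exact h2.trans (le_max_left _ _)
      · exact h2.trans (le_max_right _ _)
    have hval : 0 ≤ 2 * t * (3 + t ^ 2) / ((2 + t ^ 2) * Real.sqrt (2 + t ^ 2)) := by
      positivity
    rw [Real.norm_eq_abs, abs_of_nonneg hval]
    have step1 : 2 * t * (3 + t ^ 2) / ((2 + t ^ 2) * Real.sqrt (2 + t ^ 2))
        ≤ 3 * (t / Real.sqrt (2 + t ^ 2)) := by
      rw [div_le_iff₀ (by positivity)]
      have h1 := sq_sqrt_q t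
      have h2 := sqrt_q_pos t
      have : 3 * (t / Real.sqrt (2 + t ^ 2)) * ((2 + t ^ 2) * Real.sqrt (2 + t ^ 2))
          = 3 * t * (2 + t ^ 2) := by
        field_simp
      rw [this]
      nlinarith
    refine step1.trans ?_
    have := (ratio_mono ht0 htT).trans hTM
    linarith
  have := Convex.norm_image_sub_le_of_norm_hasDerivWithin_le
    (f := hp) (f' := fun t => 2 * t * (3 + t ^ 2) / ((2 + t ^ 2) * Real.sqrt (2 + t ^ 2)))
    (s := Set.uIcc s r)
    (fun t _ => (hp_hasDerivAt t).hasDerivWithinAt) key (convex_uIcc s r)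
    Set.left_mem_uIcc Set.right_mem_uIcc
  rw [Real.norm_eq_abs, Real.norm_eq_abs] at this
  calc |hp r - hp s| ≤ 3 * M * |r - s| := this
    _ = 3 * |r - s| * M := by ring


lemma gradH {E : Type*} [NormedAddCommGroup E] [InnerProductSpace ℝ E] [CompleteSpace E]
    {x : E} (hx : x ≠ 0) :
    HasGradientAt (fun ξ : E => ‖ξ‖ * Real.sqrt (2 + ‖ξ‖ ^ 2)) ((hp ‖x‖ / ‖x‖) • x) x := by
  have hr : 0 < ‖x‖ := norm_pos_iff.2 hx
  have ht : (0:ℝ) < ‖x‖ ^ 2 := by positivity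
  have d1 : HasDerivAt Real.sqrt (1 / (2 * Real.sqrt (‖x‖ ^ 2))) (‖x‖ ^ 2) :=
    Real.hasDerivAt_sqrt ht.ne'
  have d2 : HasDerivAt (fun t : ℝ => Real.sqrt (2 + t))
      (1 / (2 * Real.sqrt (2 + ‖x‖ ^ 2))) (‖x‖ ^ 2) := by
    have := (((hasDerivAt_id (‖x‖ ^ 2)).const_add (2:ℝ)).sqrt (by positivity))
    simpa using this
  have df := d1.mul d2
  have dn : HasFDerivAt (fun ξ : E => ‖ξ‖ ^ 2) (2 • (innerSL ℝ x)) x :=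
    (hasStrictFDerivAt_norm_sq x).hasFDerivAt
  have comp := df.comp_hasFDerivAt x dn
  have hfun : ((Real.sqrt * fun t : ℝ => Real.sqrt (2 + t)) ∘ (fun ξ : E => ‖ξ‖ ^ 2))
      = fun ξ : E => ‖ξ‖ * Real.sqrt (2 + ‖ξ‖ ^ 2) := by
    funext ξ
    simp [Function.comp, Real.sqrt_sq (norm_nonneg ξ)]
  rw [hfun] at comp
  rw [hasGradientAt_iff_hasFDerivAt]
  refine comp.congr_fderiv ?_
  have hsq : Real.sqrt (‖x‖ ^ 2) = ‖x‖ := Real.sqrt_sq (norm_nonneg x)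
  ext v
  simp only [InnerProductSpace.toDual_apply_apply, real_inner_smul_left,
    ContinuousLinearMap.smul_apply, ContinuousLinearMap.smul_apply, smul_eq_mul,
    innerSL_apply_apply, hsq]
  have hc : hp ‖x‖ / ‖x‖
      = (1 / (2 * ‖x‖) * Real.sqrt (2 + ‖x‖ ^ 2)
          + ‖x‖ * (1 / (2 * Real.sqrt (2 + ‖x‖ ^ 2)))) * 2 := by
    unfold hp
    have h1 := sq_sqrt_q ‖x‖
    have h2 := (sqrt_q_pos ‖x‖).ne'
    field_simp
    linear_combination (-1) * h1
  rw [hc]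
  ring

set_option maxHeartbeats 1000000 in
/-- For `H(ξ) = ‖ξ‖·√(2 + ‖ξ‖²)` on `ℝ³`, there is `C > 0` such that for all nonzero
`x, y` and each sign `ε ∈ {+1, -1}`:
`‖∇H(x) + ε∇H(y)‖ ≤ C·(|‖x‖-‖y‖|·max(‖x‖/⟨x⟩, ‖y‖/⟨y⟩) + min(⟨x⟩,⟨y⟩)·sin(∠(x, -εy)/2))`. -/
theorem stmt_6 (H : EuclideanSpace ℝ (Fin 3) → ℝ)
    (hH : ∀ ξ : EuclideanSpace ℝ (Fin 3), H ξ = ‖ξ‖ * Real.sqrt (2 + ‖ξ‖ ^ 2)) :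
    ∃ C > 0, ∀ x y : EuclideanSpace ℝ (Fin 3), x ≠ 0 → y ≠ 0 →
      ∀ ε : ℝ, ε = 1 ∨ ε = -1 →
      ‖gradient H x + ε • gradient H y‖ ≤
        C * (|‖x‖ - ‖y‖| *
              max (‖x‖ / Real.sqrt (2 + ‖x‖ ^ 2)) (‖y‖ / Real.sqrt (2 + ‖y‖ ^ 2)) +
            min (Real.sqrt (2 + ‖x‖ ^ 2)) (Real.sqrt (2 + ‖y‖ ^ 2)) *
              Real.sin (InnerProductGeometry.angle x (-(ε • y)) / 2)) := by
  refine ⟨4, by norm_num, ?_⟩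
  intro x y hx hy ε hε
  have hfun : H = fun ξ : EuclideanSpace ℝ (Fin 3) => ‖ξ‖ * Real.sqrt (2 + ‖ξ‖ ^ 2) :=
    funext hH
  have hr : 0 < ‖x‖ := norm_pos_iff.2 hx
  have hs : 0 < ‖y‖ := norm_pos_iff.2 hy
  have gx : gradient H x = (hp ‖x‖ / ‖x‖) • x := by rw [hfun]; exact (gradH hx).gradient
  have gy : gradient H y = (hp ‖y‖ / ‖y‖) • y := by rw [hfun]; exact (gradH hy).gradient
  set a := hp ‖x‖ with ha
  set b := hp ‖y‖ with hb
  set u : EuclideanSpace ℝ (Fin 3) := ‖x‖⁻¹ • x with hudef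
  set v : EuclideanSpace ℝ (Fin 3) := ε • (‖y‖⁻¹ • y) with hvdef
  have hεabs : |ε| = 1 := by rcases hε with h | h <;> simp [h]
  have hu : ‖u‖ = 1 := by
    rw [hudef, norm_smul, norm_inv, norm_norm, inv_mul_cancel₀ hr.ne']
  have hv : ‖v‖ = 1 := by
    rw [hvdef, norm_smul, norm_smul, norm_inv, norm_norm, Real.norm_eq_abs, hεabs,
      one_mul, inv_mul_cancel₀ hs.ne']
  have hsum : gradient H x + ε • gradient H y = a • u + b • v := by
    rw [gx, gy, hudef, hvdef]
    match_scalars <;> (field_simp; try ring)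
  have ha0 : 0 < a := hp_pos _
  have hb0 : 0 < b := hp_pos _
  have key : ‖a • u + b • v‖ ≤ |a - b| + min a b * ‖u + v‖ := by
    rcases min_cases a b with ⟨hm, hab⟩ | ⟨hm, hab⟩
    · have hrep : a • u + b • v = a • (u + v) + (b - a) • v := by module
      rw [hm, hrep]
      have h := norm_add_le (a • (u + v)) ((b - a) • v)
      rw [norm_smul, norm_smul, hv, Real.norm_eq_abs, Real.norm_eq_abs, mul_one,
        abs_of_pos ha0] at h
      have habs : |b - a| = |a - b| := abs_sub_comm b a
      linarith
    · have hrep : a • u + b • v = b • (u + v) + (a - b) • u := by module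
      rw [hm, hrep]
      have h := norm_add_le (b • (u + v)) ((a - b) • u)
      rw [norm_smul, norm_smul, hu, Real.norm_eq_abs, Real.norm_eq_abs, mul_one,
        abs_of_pos hb0] at h
      linarith
  set θ := InnerProductGeometry.angle x (-(ε • y)) with hθdef
  have hθ0 : 0 ≤ θ := InnerProductGeometry.angle_nonneg _ _
  have hθπ : θ ≤ Real.pi := InnerProductGeometry.angle_le_pi _ _
  have hcos : Real.cos θ = -(inner ℝ u v : ℝ) := by
    rw [hθdef, InnerProductGeometry.cos_angle]
    have h1 : ‖-(ε • y)‖ = ‖y‖ := by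
      rw [norm_neg, norm_smul, Real.norm_eq_abs, hεabs, one_mul]
    have h2 : (inner ℝ x (-(ε • y)) : ℝ) = -(ε * (inner ℝ x y : ℝ)) := by
      rw [inner_neg_right, real_inner_smul_right]
    have h3 : (inner ℝ u v : ℝ) = ‖x‖⁻¹ * (ε * (‖y‖⁻¹ * (inner ℝ x y : ℝ))) := by
      rw [hudef, hvdef, real_inner_smul_left, real_inner_smul_right, real_inner_smul_right]
    rw [h1, h2, h3]
    field_simp
  have hnormuv : ‖u + v‖ = 2 * Real.sin (θ / 2) := by
    have hsq : ‖u + v‖ ^ 2 = 2 - 2 * Real.cos θ := by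
      rw [@norm_add_sq_real, hu, hv, hcos]; ring
    have hsin : Real.sin (θ / 2) = Real.sqrt ((1 - Real.cos θ) / 2) :=
      Real.sin_half_eq_sqrt hθ0 (by nlinarith [Real.pi_pos])
    rw [hsin, show ‖u + v‖ = Real.sqrt (‖u + v‖ ^ 2) from (Real.sqrt_sq (norm_nonneg _)).symm,
      hsq, show (2:ℝ) - 2 * Real.cos θ = 2 ^ 2 * ((1 - Real.cos θ) / 2) by ring,
      Real.sqrt_mul (by norm_num : (0:ℝ) ≤ 2 ^ 2), Real.sqrt_sq (by norm_num : (0:ℝ) ≤ 2)]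
  have hsin0 : 0 ≤ Real.sin (θ / 2) :=
    Real.sin_nonneg_of_nonneg_of_le_pi (by linarith) (by nlinarith [Real.pi_pos])
  have hlip : |a - b| ≤ 3 * |‖x‖ - ‖y‖| *
      max (‖x‖ / Real.sqrt (2 + ‖x‖ ^ 2)) (‖y‖ / Real.sqrt (2 + ‖y‖ ^ 2)) :=
    hp_lip hr.le hs.le
  have hmin : min a b ≤ 2 * min (Real.sqrt (2 + ‖x‖ ^ 2)) (Real.sqrt (2 + ‖y‖ ^ 2)) := by
    rcases min_cases (Real.sqrt (2 + ‖x‖ ^ 2)) (Real.sqrt (2 + ‖y‖ ^ 2)) with ⟨hm, _⟩ | ⟨hm, _⟩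
    · rw [hm]; exact (min_le_left a b).trans (hp_le _)
    · rw [hm]; exact (min_le_right a b).trans (hp_le _)
  have hM0 : 0 ≤ max (‖x‖ / Real.sqrt (2 + ‖x‖ ^ 2)) (‖y‖ / Real.sqrt (2 + ‖y‖ ^ 2)) :=
    le_trans (by positivity) (le_max_left _ _)
  have hmin0 : 0 ≤ min (Real.sqrt (2 + ‖x‖ ^ 2)) (Real.sqrt (2 + ‖y‖ ^ 2)) :=
    le_min (Real.sqrt_nonneg _) (Real.sqrt_nonneg _)
  rw [hsum]
  calc ‖a • u + b • v‖ ≤ |a - b| + min a b * ‖u + v‖ := key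
    _ = |a - b| + min a b * (2 * Real.sin (θ / 2)) := by rw [hnormuv]
    _ ≤ 3 * |‖x‖ - ‖y‖| * max (‖x‖ / Real.sqrt (2 + ‖x‖ ^ 2)) (‖y‖ / Real.sqrt (2 + ‖y‖ ^ 2))
        + 2 * min (Real.sqrt (2 + ‖x‖ ^ 2)) (Real.sqrt (2 + ‖y‖ ^ 2)) * (2 * Real.sin (θ / 2)) := by
        refine add_le_add hlip (mul_le_mul_of_nonneg_right hmin (by positivity))
    _ ≤ 4 * (|‖x‖ - ‖y‖| *
          max (‖x‖ / Real.sqrt (2 + ‖x‖ ^ 2)) (‖y‖ / Real.sqrt (2 + ‖y‖ ^ 2)) +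
        min (Real.sqrt (2 + ‖x‖ ^ 2)) (Real.sqrt (2 + ‖y‖ ^ 2)) * Real.sin (θ / 2)) := by
        nlinarith [mul_nonneg (abs_nonneg (‖x‖ - ‖y‖)) hM0, mul_nonneg hmin0 hsin0]
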